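/- Let H and N be groups, H₁ ≤ Z(H), N₁ ≤ Z(N), and suppose there is a group homomorphism η : H → N whose restriction ξ = η|_{H₁} is an isomorphism from H₁ onto N₁. Let Z = {(a, ξ(a)⁻¹) : a ∈ H₁} ≤ H × N. If H₁ ∩ [H,H] equals the subgroup generated by H₁ ∩ K(H), then Z ∩ ([H,H] × [N,N]) equals the subgroup generated by Z ∩ (K(H) × K(N)). -/

import Mathlib

/-- `Kset G` is the set of commutators `[x,y] = x⁻¹y⁻¹xy` of `G`. -/
def Kset (G : Type*) [Group G] : Set G := {g | ∃ x y : G, g = x⁻¹ * y⁻¹ * x * y}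

open scoped commutatorElement in
lemma Kset_subset_commutator (G : Type*) [Group G] :
    Kset G ⊆ (commutator G : Set G) := by
  rintro g ⟨x, y, rfl⟩
  have : x⁻¹ * y⁻¹ * x * y = ⁅x⁻¹, y⁻¹⁆ := by
    group
  rw [this]
  exact Subgroup.commutator_mem_commutator (Subgroup.mem_top _) (Subgroup.mem_top _)

lemma Kset_inv {G : Type*} [Group G] {g : G} (hg : g ∈ Kset G) : g⁻¹ ∈ Kset G := by
  obtain ⟨x, y, rfl⟩ := hg
  exact ⟨y, x, by group⟩

lemma Kset_map {G G' : Type*} [Group G] [Group G'] (f : G →* G') {g : G}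
    (hg : g ∈ Kset G) : f g ∈ Kset G' := by
  obtain ⟨x, y, rfl⟩ := hg
  exact ⟨f x, f y, by simp⟩

theorem stmt_14 {H N : Type*} [Group H] [Group N]
    (H₁ : Subgroup H) (N₁ : Subgroup N)
    (hH₁ : H₁ ≤ Subgroup.center H) (hN₁ : N₁ ≤ Subgroup.center N)
    (η : H →* N) (ξ : H₁ ≃* N₁)
    (hηξ : ∀ a : H₁, η (a : H) = ((ξ a : N₁) : N))
    (Z : Subgroup (H × N))
    (hZ : ∀ p : H × N, p ∈ Z ↔ ∃ a : H₁, p = ((a : H), ((ξ a : N₁) : N)⁻¹))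
    (h : H₁ ⊓ commutator H = Subgroup.closure ((H₁ : Set H) ∩ Kset H)) :
    Z ⊓ (commutator H).prod (commutator N) =
      Subgroup.closure ((Z : Set (H × N)) ∩ (Kset H ×ˢ Kset N)) := by
  apply le_antisymm
  · rintro p ⟨hpZ, hp1, hp2⟩
    obtain ⟨a, rfl⟩ := (hZ p).mp hpZ
    -- (a : H) ∈ H₁ ⊓ commutator H
    have ha : (a : H) ∈ Subgroup.closure ((H₁ : Set H) ∩ Kset H) := by
      rw [← h]; exact ⟨a.2, hp1⟩
    -- induction
    have key : ∀ g ∈ Subgroup.closure ((H₁ : Set H) ∩ Kset H),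
        g ∈ H₁ ∧ (g, (η g)⁻¹) ∈ Subgroup.closure ((Z : Set (H × N)) ∩ (Kset H ×ˢ Kset N)) := by
      intro g hg
      induction hg using Subgroup.closure_induction with
      | mem s hs =>
        refine ⟨hs.1, Subgroup.subset_closure ⟨?_, hs.2, Kset_inv (Kset_map η hs.2)⟩⟩
        exact (hZ _).mpr ⟨⟨s, hs.1⟩, by rw [hηξ ⟨s, hs.1⟩]⟩
      | one => exact ⟨H₁.one_mem, by rw [map_one, inv_one]; exact Subgroup.one_mem _⟩
      | mul x y hx hy ihx ihy =>
        refine ⟨H₁.mul_mem ihx.1 ihy.1, ?_⟩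
        have hcomm : η x * η y = η y * η x := by
          have := Subgroup.mem_center_iff.mp (hN₁ (show η x ∈ N₁ by
            rw [hηξ ⟨x, ihx.1⟩]; exact (ξ ⟨x, ihx.1⟩).2)) (η y)
          exact this.symm
        have hc : (η x)⁻¹ * (η y)⁻¹ = (η y)⁻¹ * (η x)⁻¹ := by
          rw [← mul_inv_rev, ← hcomm, mul_inv_rev]
        have : ((x*y : H), (η (x*y))⁻¹) = (x, (η x)⁻¹) * (y, (η y)⁻¹) := by
          ext <;> simp [mul_inv_rev, hc]
        rw [this]
        exact Subgroup.mul_mem _ ihx.2 ihy.2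
      | inv x hx ihx =>
        refine ⟨H₁.inv_mem ihx.1, ?_⟩
        have : ((x⁻¹ : H), (η x⁻¹)⁻¹) = (x, (η x)⁻¹)⁻¹ := by ext <;> simp
        rw [this]
        exact Subgroup.inv_mem _ ihx.2
    obtain ⟨_, hmem⟩ := key _ ha
    rwa [hηξ a] at hmem
  · rw [Subgroup.closure_le]
    rintro p ⟨hpZ, hp1, hp2⟩
    exact ⟨hpZ, Kset_subset_commutator H hp1, Kset_subset_commutator N hp2⟩
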